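/- Let q be a monic complex polynomial of degree d ≥ 1, let n ≥ 1, and let f be a complex polynomial of degree at most n. Then for all (u₁,…,uₙ) ∈ ℂⁿ, S_{q,n}(f)(u₁,…,uₙ) = Sym_n(T_{q,n}(f))(u₁,…,uₙ). -/

import Mathlib

open Polynomial

/-- The apolarity form `[f,g]_m`. -/
noncomputable def apol (m : ℕ) (f g : Polynomial ℂ) : ℂ :=
  ∑ k ∈ Finset.range (m + 1),
    (-1 : ℂ) ^ k * ((m.choose k : ℂ))⁻¹ * f.coeff k * g.coeff (m - k)

/-- The symmetrization `Sym_N(f)` of a polynomial, as a function on `ι → ℂ`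
with `N = card ι`. -/
noncomputable def symFun {ι : Type*} [Fintype ι] (f : Polynomial ℂ) (y : ι → ℂ) : ℂ :=
  ∑ k ∈ Finset.range (Fintype.card ι + 1),
    (((Fintype.card ι).choose k : ℂ))⁻¹ * f.coeff k *
      MvPolynomial.eval y (MvPolynomial.esymm ι ℂ k)

/-- A circular domain: an open or closed disk or half-plane, or a complement thereof. -/
def IsCircularDomain (D : Set ℂ) : Prop :=
  ∃ (α γ : ℝ) (β : ℂ),
    D = {z : ℂ | α * Complex.normSq z + ((starRingEnd ℂ) β * z).re + γ < 0} ∨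
    D = {z : ℂ | α * Complex.normSq z + ((starRingEnd ℂ) β * z).re + γ ≤ 0}

/-- `q_∘(D) = {u : q⁻¹(u) ⊆ D}`. -/
def innerImage (q : Polynomial ℂ) (D : Set ℂ) : Set ℂ :=
  {u : ℂ | ∀ z : ℂ, q.eval z = u → z ∈ D}

/-- `S_{q,n}(f)(u₁,…,uₙ) = [f∘q, ∏ⱼ (q - uⱼ)]_{nd}`. -/
noncomputable def Sfun (q : Polynomial ℂ) (n : ℕ) (f : Polynomial ℂ) (u : Fin n → ℂ) : ℂ :=
  apol (n * q.natDegree) (f.comp q) (∏ j, (q - Polynomial.C (u j)))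

/-- The Fischer inner product `⟨f,g⟩_n`. -/
noncomputable def fischer (n : ℕ) (f g : Polynomial ℂ) : ℂ :=
  ∑ k ∈ Finset.range (n + 1),
    ((n.choose k : ℂ))⁻¹ * f.coeff k * (starRingEnd ℂ) (g.coeff k)

lemma apol_sum (m : ℕ) (f : Polynomial ℂ) {ι : Type*} (s : Finset ι) (g : ι → Polynomial ℂ) :
    apol m f (∑ i ∈ s, g i) = ∑ i ∈ s, apol m f (g i) := by
  simp only [apol, Polynomial.finset_sum_coeff, Finset.mul_sum]
  exact Finset.sum_comm

lemma apol_C_mul (m : ℕ) (f : Polynomial ℂ) (c : ℂ) (g : Polynomial ℂ) :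
    apol m f (Polynomial.C c * g) = c * apol m f g := by
  simp only [apol, Polynomial.coeff_C_mul, Finset.mul_sum]
  exact Finset.sum_congr rfl fun k _ => by ring

lemma apol_comp_expand (m n : ℕ) (F q g : Polynomial ℂ) (hg : g.natDegree < n + 1) :
    apol m F (g.comp q) = ∑ k ∈ Finset.range (n + 1), g.coeff k * apol m F (q ^ k) := by
  have hcomp : g.comp q = ∑ k ∈ Finset.range (n + 1), Polynomial.C (g.coeff k) * q ^ k := by
    rw [Polynomial.comp, Polynomial.eval₂_eq_sum_range' Polynomial.C hg q]
  rw [hcomp, apol_sum]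
  exact Finset.sum_congr rfl fun k _ => apol_C_mul m F (g.coeff k) (q ^ k)

lemma esymm_eval {n : ℕ} (u : Fin n → ℂ) (k : ℕ) :
    MvPolynomial.eval u (MvPolynomial.esymm (Fin n) ℂ k)
      = (Finset.univ.val.map u).esymm k := by
  rw [Finset.esymm_map_val]
  simp [MvPolynomial.esymm, map_sum]

/-- S_{q,n}(f) = Sym_n(T_{q,n}(f)).  Here T is the unique polynomial
of degree at most n with T(u) = [f∘q, (q-u)^n]_{nd} for all u. -/
theorem stmt_5 (d : ℕ) (hd : 1 ≤ d) (q : Polynomial ℂ) (hq : q.Monic)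
    (hqd : q.natDegree = d) (n : ℕ) (hn : 1 ≤ n)
    (f : Polynomial ℂ) (hf : f.degree ≤ (n : ℕ))
    (T : Polynomial ℂ) (hTdeg : T.degree ≤ (n : ℕ))
    (hT : ∀ u : ℂ, T.eval u = apol (n * d) (f.comp q) ((q - Polynomial.C u) ^ n))
    (u : Fin n → ℂ) :
    Sfun q n f u = symFun T u := by
  classical
  set A : ℕ → ℂ := fun k => apol (n * d) (f.comp q) (q ^ k) with hA
  set e : ℕ → ℂ := fun k => MvPolynomial.eval u (MvPolynomial.esymm (Fin n) ℂ k) with he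
  -- `Sfun` expansion via Vieta
  have hprodcomp : (∏ j, (q - Polynomial.C (u j)))
      = (∏ j, (Polynomial.X - Polynomial.C (u j))).comp q := by
    rw [Polynomial.prod_comp]
    simp
  have hPdeg : (∏ j : Fin n, (Polynomial.X - Polynomial.C (u j))).natDegree < n + 1 := by
    refine Nat.lt_succ_of_le ?_
    calc (∏ j : Fin n, (Polynomial.X - Polynomial.C (u j))).natDegree
        ≤ ∑ j : Fin n, (Polynomial.X - Polynomial.C (u j)).natDegree :=
          Polynomial.natDegree_prod_le _ _
      _ ≤ n := by simp [Polynomial.natDegree_X_sub_C]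
  have hPcoeff : ∀ k ∈ Finset.range (n + 1),
      (∏ j : Fin n, (Polynomial.X - Polynomial.C (u j))).coeff k
        = (-1 : ℂ) ^ (n - k) * e (n - k) := by
    intro k hk
    rw [Finset.mem_range, Nat.lt_succ_iff] at hk
    have hcard : Multiset.card (Finset.univ.val.map u) = n := by simp
    have hvieta := Multiset.prod_X_sub_C_coeff (Finset.univ.val.map u)
      (k := k) (by rw [hcard]; exact hk)
    have heq : (∏ j : Fin n, (Polynomial.X - Polynomial.C (u j)))
        = ((Finset.univ.val.map u).map fun t => Polynomial.X - Polynomial.C t).prod := by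
      rw [Multiset.map_map]; rfl
    rw [heq, hvieta, hcard]
    exact congrArg (fun t => (-1 : ℂ) ^ (n - k) * t) (esymm_eval u (n - k)).symm
  have hS : Sfun q n f u
      = ∑ k ∈ Finset.range (n + 1), (-1 : ℂ) ^ (n - k) * e (n - k) * A k := by
    rw [Sfun, hqd, hprodcomp, apol_comp_expand _ n _ _ _ hPdeg]
    exact Finset.sum_congr rfl fun k hk => by rw [hPcoeff k hk]
  -- `T` has explicit coefficients
  set b : ℕ → ℂ := fun m => (-1 : ℂ) ^ m * (n.choose m : ℂ) * A (n - m) with hb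
  set P : Polynomial ℂ := ∑ m ∈ Finset.range (n + 1), Polynomial.C (b m) * Polynomial.X ^ m
    with hP
  have hTeval : ∀ v : ℂ, T.eval v
      = ∑ k ∈ Finset.range (n + 1),
          (-1 : ℂ) ^ (k + n) * v ^ (n - k) * (n.choose k : ℂ) * A k := by
    intro v
    have hexp : (q - Polynomial.C v) ^ n
        = ∑ k ∈ Finset.range (n + 1),
            Polynomial.C ((-1 : ℂ) ^ (k + n) * v ^ (n - k) * (n.choose k : ℂ)) * q ^ k := by
      rw [sub_pow]
      refine Finset.sum_congr rfl fun k _ => ?_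
      simp only [map_mul, map_pow, map_neg, map_one, map_natCast]
      ring
    rw [hT v, hexp, apol_sum]
    exact Finset.sum_congr rfl fun k _ => by rw [apol_C_mul]
  have hTP : T = P := by
    apply Polynomial.funext
    intro v
    rw [hTeval v, hP]
    have hre : ∑ k ∈ Finset.range (n + 1),
        (-1 : ℂ) ^ (k + n) * v ^ (n - k) * (n.choose k : ℂ) * A k
        = ∑ j ∈ Finset.range (n + 1),
            (-1 : ℂ) ^ ((n - j) + n) * v ^ (n - (n - j)) * (n.choose (n - j) : ℂ) * A (n - j) := by
      exact (Finset.sum_range_reflect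
        (fun k => (-1 : ℂ) ^ (k + n) * v ^ (n - k) * (n.choose k : ℂ) * A k) (n + 1)).symm
    rw [hre]
    rw [Polynomial.eval_finset_sum]
    refine Finset.sum_congr rfl fun j hj => ?_
    rw [Finset.mem_range, Nat.lt_succ_iff] at hj
    have h1 : n - (n - j) = j := by omega
    have h2 : n.choose (n - j) = n.choose j := Nat.choose_symm hj
    have h3 : (-1 : ℂ) ^ ((n - j) + n) = (-1 : ℂ) ^ j := by
      rw [show (n - j) + n = j + 2 * (n - j) by omega, pow_add, pow_mul]
      simp
    rw [h1, h2, h3]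
    simp only [Polynomial.eval_mul, Polynomial.eval_C, Polynomial.eval_pow, Polynomial.eval_X, hb]
    ring
  have hTcoeff : ∀ m ∈ Finset.range (n + 1), T.coeff m = b m := by
    intro m hm
    rw [hTP, hP, Polynomial.finset_sum_coeff]
    simp only [Polynomial.coeff_C_mul, Polynomial.coeff_X_pow, mul_ite, mul_one, mul_zero]
    rw [Finset.sum_ite_eq (Finset.range (n + 1)) m b, if_pos hm]
  -- conclude
  have hsym : symFun T u = ∑ m ∈ Finset.range (n + 1), (-1 : ℂ) ^ m * A (n - m) * e m := by
    rw [symFun]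
    simp only [Fintype.card_fin]
    refine Finset.sum_congr rfl fun m hm => ?_
    have hch : (n.choose m : ℂ) ≠ 0 := by
      rw [Finset.mem_range, Nat.lt_succ_iff] at hm
      exact_mod_cast (Nat.choose_pos hm).ne'
    rw [hTcoeff m hm]
    simp only [hb, he]
    field_simp
  rw [hS, hsym]
  rw [← Finset.sum_range_reflect (fun k => (-1 : ℂ) ^ (n - k) * e (n - k) * A k) (n + 1)]
  refine Finset.sum_congr rfl fun j hj => ?_
  rw [Finset.mem_range, Nat.lt_succ_iff] at hj
  have h0 : n + 1 - 1 - j = n - j := by omega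
  have h1 : n - (n - j) = j := by omega
  rw [h0, h1]
  ring
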